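/- Let k ≥ 1. Define c_k := inf{ x > 0 : d/dx ( √x · J_{√(2k−1)/2}(x) ) = 0 }, where J_r is the Bessel function of the first kind of order r. Then c_k > 0, and the function H_{k,1}(r) := (√r · J_{√(2k−1)/2}(r)) / (√c_k · J_{√(2k−1)/2}(c_k)) for 0 < r ≤ c_k, extended by 1 for r > c_k, is a well-defined cumulative distribution function on (0,∞): it is continuous, nondecreasing, takes values in [0,1], and equals 1 at c_k. -/

import Mathlib

open Set

/-- Bessel function of the first kind J_ν -/
noncomputable def besselJ (ν : ℝ) (x : ℝ) : ℝ :=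
  ∑' m : ℕ, ((-1:ℝ)^m / ((Nat.factorial m : ℝ) * Real.Gamma ((m:ℝ) + ν + 1))) *
    (x/2) ^ (2*(m:ℝ) + ν)

/-- ν = √(2k-1)/2 -/
noncomputable def besselNu (k : ℕ) : ℝ := Real.sqrt (2*(k:ℝ) - 1) / 2

/-- c_k, smallest positive critical point of x ↦ √x J_ν(x) -/
noncomputable def besselC (k : ℕ) : ℝ :=
  sInf {x : ℝ | 0 < x ∧ deriv (fun y => Real.sqrt y * besselJ (besselNu k) y) x = 0}

/-- H_{k,1}, the least-favourable radial cdf -/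
noncomputable def Hk (k : ℕ) (r : ℝ) : ℝ :=
  if r ≤ besselC k then
    (Real.sqrt r * besselJ (besselNu k) r) /
      (Real.sqrt (besselC k) * besselJ (besselNu k) (besselC k))
  else 1

/-- the least-favourable radial density h_{k,1} (up to scalar): r^{k-1} h_{k,1}(r) ∝ H_{k,1}'(r) -/
noncomputable def hk1 (k : ℕ) (r : ℝ) : ℝ := deriv (Hk k) r / r ^ (k - 1)

/-- ω_k := (2c_k² + k - 1)/(8 c_k) -/
noncomputable def omegak (k : ℕ) : ℝ :=
  (2*(besselC k)^2 + (k:ℝ) - 1) / (8 * besselC k)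


open Filter Topology

noncomputable def aa (ν : ℝ) (m : ℕ) : ℝ :=
  (-1:ℝ)^m / ((Nat.factorial m : ℝ) * Real.Gamma ((m:ℝ) + ν + 1) * 4^m)

lemma gamma_arg_pos {ν : ℝ} (hν : 0 < ν) (m : ℕ) : (0:ℝ) < (m:ℝ) + ν + 1 := by
  positivity

lemma aa_abs {ν : ℝ} (hν : 0 < ν) (m : ℕ) :
    |aa ν m| = 1 / ((Nat.factorial m : ℝ) * Real.Gamma ((m:ℝ) + ν + 1) * 4^m) := by
  have h1 : (0:ℝ) < Real.Gamma ((m:ℝ) + ν + 1) := Real.Gamma_pos_of_pos (gamma_arg_pos hν m)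
  have h2 : (0:ℝ) < (Nat.factorial m : ℝ) := by positivity
  rw [aa, abs_div, abs_pow, abs_neg, abs_one, one_pow]
  congr 1
  rw [abs_of_pos (by positivity)]

lemma aa_ne_zero {ν : ℝ} (hν : 0 < ν) (m : ℕ) : aa ν m ≠ 0 := by
  have h1 : (0:ℝ) < Real.Gamma ((m:ℝ) + ν + 1) := Real.Gamma_pos_of_pos (gamma_arg_pos hν m)
  have h2 : (0:ℝ) < (Nat.factorial m : ℝ) := by positivity
  have : |aa ν m| ≠ 0 := by rw [aa_abs hν m]; positivity
  simpa using this

lemma aa_pos0 {ν : ℝ} (hν : 0 < ν) : 0 < aa ν 0 := by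
  have h1 : (0:ℝ) < Real.Gamma ((0:ℝ) + ν + 1) := Real.Gamma_pos_of_pos (by positivity)
  simp [aa]
  positivity

lemma aa_succ {ν : ℝ} (hν : 0 < ν) (m : ℕ) :
    aa ν (m+1) = -aa ν m / (4 * ((m:ℝ)+1) * ((m:ℝ) + ν + 1)) := by
  have hG : Real.Gamma (((m:ℕ):ℝ) + 1 + ν + 1) = ((m:ℝ) + ν + 1) * Real.Gamma ((m:ℝ) + ν + 1) := by
    have := Real.Gamma_add_one (s := (m:ℝ) + ν + 1) (ne_of_gt (gamma_arg_pos hν m))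
    rw [← this]; ring_nf
  have h1 : (0:ℝ) < Real.Gamma ((m:ℝ) + ν + 1) := Real.Gamma_pos_of_pos (gamma_arg_pos hν m)
  have h2 : (0:ℝ) < (Nat.factorial m : ℝ) := by positivity
  have h3 : ((m:ℝ) + ν + 1) ≠ 0 := ne_of_gt (gamma_arg_pos hν m)
  rw [aa, aa]
  push_cast [Nat.factorial_succ, hG]
  field_simp
  ring

lemma aa_abs_pos {ν : ℝ} (hν : 0 < ν) (m : ℕ) : 0 < |aa ν m| :=
  abs_pos.mpr (aa_ne_zero hν m)

lemma aa_abs_succ {ν : ℝ} (hν : 0 < ν) (m : ℕ) :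
    |aa ν (m+1)| = |aa ν m| / (4 * ((m:ℝ)+1) * ((m:ℝ) + ν + 1)) := by
  rw [aa_succ hν m, abs_div, abs_neg]
  congr 1
  have h1 := gamma_arg_pos hν m
  rw [abs_of_pos (by positivity)]

lemma aaSummable {ν : ℝ} (hν : 0 < ν) (j k : ℕ) {s : ℝ} (hs : 0 ≤ s) :
    Summable (fun m : ℕ => ((m:ℝ)+1)^j * |aa ν (m+k)| * s^m) := by
  rcases eq_or_lt_of_le hs with h0 | hs
  · apply summable_of_ne_finset_zero (s := {0})
    intro m hm
    have : m ≠ 0 := by simpa using hm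
    simp [← h0, zero_pow this]
  · set f : ℕ → ℝ := fun m => ((m:ℝ)+1)^j * |aa ν (m+k)| * s^m with hf
    have hfpos : ∀ m, 0 < f m := fun m => by
      have := aa_abs_pos hν (m+k); positivity
    apply summable_of_ratio_test_tendsto_lt_one (l := 0) one_pos
      (Eventually.of_forall fun m => (hfpos m).ne')
    have hratio : ∀ m : ℕ, ‖f (m+1)‖ / ‖f m‖ =
        (((m:ℝ)+2)/((m:ℝ)+1))^j * (s / (4 * ((m:ℝ)+(k:ℝ)+1) * ((m:ℝ)+(k:ℝ) + ν + 1))) := by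
      intro m
      have h1 := gamma_arg_pos hν (m+k)
      have h2 : (0:ℝ) < (m:ℝ)+(k:ℝ)+1 := by positivity
      rw [Real.norm_of_nonneg (hfpos _).le, Real.norm_of_nonneg (hfpos _).le, hf]
      simp only
      have : ((m:ℕ)+1+k) = (m+k)+1 := by omega
      rw [this, aa_abs_succ hν (m+k)]
      have e1 : ((m+k : ℕ) : ℝ) = (m:ℝ) + (k:ℝ) := by push_cast; ring
      rw [e1]
      have hA := aa_abs_pos hν (m+k)
      have hsp : (0:ℝ) < s ^ m := pow_pos hs m
      rw [div_pow]
      field_simp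
      push_cast
      ring
    rw [show (0:ℝ) = 1^j * 0 by simp]
    apply Tendsto.congr (fun m => (hratio m).symm)
    apply Tendsto.mul
    · apply Tendsto.pow
      have : Tendsto (fun m : ℕ => 1 + 1/((m:ℝ)+1)) atTop (𝓝 (1+0)) :=
        tendsto_const_nhds.add tendsto_one_div_add_atTop_nhds_zero_nat
      simp only [add_zero] at this
      apply this.congr
      intro m
      have : ((m:ℝ)+1) ≠ 0 := by positivity
      field_simp
      ring
    · apply squeeze_zero (fun m => by positivity)
        (g := fun m : ℕ => s * (1/((m:ℝ)+1)))
      · intro m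
        rw [div_le_iff₀ (by positivity)]
        have h1 : (0:ℝ) < (m:ℝ)+(k:ℝ)+1 := by positivity
        have h2 : (0:ℝ) < (m:ℝ)+(k:ℝ)+ν+1 := by positivity
        have hle : (m:ℝ)+1 ≤ 4 * ((m:ℝ)+(k:ℝ)+1) * ((m:ℝ)+(k:ℝ)+ν+1) := by
          nlinarith [Nat.cast_nonneg (α := ℝ) m, Nat.cast_nonneg (α := ℝ) k]
        calc s = s * (((m:ℝ)+1) * (1/((m:ℝ)+1))) := by field_simp
          _ ≤ s * (1/((m:ℝ)+1)) * (4 * ((m:ℝ)+(k:ℝ)+1) * ((m:ℝ)+(k:ℝ)+ν+1)) := by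
              rw [mul_comm ((m:ℝ)+1)]
              rw [← mul_assoc]
              exact mul_le_mul_of_nonneg_left hle (by positivity)
      · rw [show (0:ℝ) = s * 0 by simp]
        exact tendsto_const_nhds.mul tendsto_one_div_add_atTop_nhds_zero_nat

lemma hasDerivAt_tsum_pow (c : ℕ → ℝ)
    (hc : ∀ s : ℝ, 0 ≤ s → Summable fun m : ℕ => |c m| * s^m)
    (hc' : ∀ s : ℝ, 0 ≤ s → Summable fun m : ℕ => ((m:ℝ)+1) * |c (m+1)| * s^m)
    (t : ℝ) : HasDerivAt (fun x => ∑' m, c m * x^m) (∑' m : ℕ, ((m:ℝ)+1) * c (m+1) * t^m) t := by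
  set R : ℝ := |t| + 1 with hR
  have hR0 : 0 ≤ R := by positivity
  have htR : t ∈ Metric.ball (0:ℝ) R := by
    simp [Real.dist_eq, hR]
  set u : ℕ → ℝ := fun m => Nat.rec 0 (fun n _ => ((n:ℝ)+1) * |c (n+1)| * R^n) m with hu
  have hu0 : u 0 = 0 := rfl
  have huS : u ∘ (· + 1) = fun n : ℕ => ((n:ℝ)+1) * |c (n+1)| * R^n := rfl
  have hsumu : Summable u := by
    rw [← summable_nat_add_iff 1]
    exact (hc' R hR0)
  have hbound : ∀ (m : ℕ) (x : ℝ), x ∈ Metric.ball (0:ℝ) R →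
      ‖c m * ((m:ℝ) * x^(m-1))‖ ≤ u m := by
    intro m x hx
    have hxR : |x| ≤ R := by
      have := mem_ball_zero_iff.mp hx
      simpa [Real.norm_eq_abs] using this.le
    match m with
    | 0 => simp [hu0]
    | n+1 =>
      have : ‖c (n+1) * (((n+1:ℕ):ℝ) * x^n)‖ = ((n:ℝ)+1) * |c (n+1)| * |x|^n := by
        rw [Real.norm_eq_abs, abs_mul, abs_mul, abs_pow]
        push_cast
        rw [abs_of_nonneg (by positivity : (0:ℝ) ≤ (n:ℝ)+1)]
        ring
      rw [show (n+1) - 1 = n from rfl, this]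
      have := pow_le_pow_left₀ (abs_nonneg x) hxR n
      have h1 : (0:ℝ) ≤ ((n:ℝ)+1) * |c (n+1)| := by positivity
      calc ((n:ℝ)+1) * |c (n+1)| * |x|^n ≤ ((n:ℝ)+1) * |c (n+1)| * R^n :=
        mul_le_mul_of_nonneg_left this h1
      _ = u (n+1) := rfl
  have hderivsum : ∀ x : ℝ, Summable (fun m => c m * ((m:ℝ) * x^(m-1))) := by
    intro x
    by_cases hx : x ∈ Metric.ball (0:ℝ) R
    · exact Summable.of_norm_bounded hsumu (fun m => hbound m x hx)
    · set R' : ℝ := |x| + 1 with hR'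
      have : ∀ m : ℕ, ‖c m * ((m:ℝ) * x^(m-1))‖ ≤
          (fun m => Nat.rec 0 (fun n _ => ((n:ℝ)+1) * |c (n+1)| * R'^n) m) m := by
        intro m
        match m with
        | 0 => simp
        | n+1 =>
          have hxR : |x| ≤ R' := by simp [hR']
          have : ‖c (n+1) * (((n+1:ℕ):ℝ) * x^n)‖ = ((n:ℝ)+1) * |c (n+1)| * |x|^n := by
            rw [Real.norm_eq_abs, abs_mul, abs_mul, abs_pow]
            push_cast
            rw [abs_of_nonneg (by positivity : (0:ℝ) ≤ (n:ℝ)+1)]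
            ring
          rw [show (n+1) - 1 = n from rfl, this]
          exact mul_le_mul_of_nonneg_left (pow_le_pow_left₀ (abs_nonneg x) hxR n)
            (by positivity)
      refine Summable.of_norm_bounded ?_ this
      rw [← summable_nat_add_iff 1]
      exact hc' R' (by positivity)
  have hmain : HasDerivAt (fun x => ∑' m, c m * x^m)
      (∑' m, c m * ((m:ℝ) * t^(m-1))) t := by
    apply hasDerivAt_of_tendstoUniformlyOn (f := fun N x => ∑ m ∈ Finset.range N, c m * x^m)
      (f' := fun N x => ∑ m ∈ Finset.range N, c m * ((m:ℝ) * x^(m-1)))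
      Metric.isOpen_ball
      (tendstoUniformlyOn_tsum_nat hsumu hbound)
      ?_ ?_ htR
    · filter_upwards with N x hx
      apply HasDerivAt.fun_sum
      intro m _
      exact (hasDerivAt_pow m x).const_mul (c m)
    · intro x hx
      have hs : Summable (fun m => c m * x^m) := by
        apply Summable.of_norm_bounded (hc |x| (abs_nonneg x))
        intro m
        rw [Real.norm_eq_abs, abs_mul, abs_pow]
      exact hs.hasSum.tendsto_sum_nat
  have hrw : (∑' m, c m * ((m:ℝ) * t^(m-1))) = ∑' m : ℕ, ((m:ℝ)+1) * c (m+1) * t^m := by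
    rw [Summable.tsum_eq_zero_add (hderivsum t)]
    simp only [Nat.cast_zero, zero_mul, mul_zero, zero_add]
    apply tsum_congr
    intro m
    push_cast
    ring_nf
  rwa [hrw] at hmain

noncomputable def FF (ν : ℝ) (t : ℝ) : ℝ := ∑' m : ℕ, aa ν m * t^m
noncomputable def FF1 (ν : ℝ) (t : ℝ) : ℝ := ∑' m : ℕ, ((m:ℝ)+1) * aa ν (m+1) * t^m
noncomputable def FF2 (ν : ℝ) (t : ℝ) : ℝ :=
  ∑' m : ℕ, ((m:ℝ)+2) * ((m:ℝ)+1) * aa ν (m+2) * t^m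

lemma abs_le_helper {ν : ℝ} (hν : 0 < ν) (t : ℝ) (j k : ℕ) :
    Summable (fun m : ℕ => ((m:ℝ)+1)^j * |aa ν (m+k)| * |t|^m) :=
  aaSummable hν j k (abs_nonneg t)

lemma summable_FF {ν : ℝ} (hν : 0 < ν) (t : ℝ) :
    Summable (fun m : ℕ => aa ν m * t^m) := by
  apply Summable.of_norm_bounded (abs_le_helper hν t 0 0)
  intro m
  simp [abs_mul, abs_pow]

lemma summable_FF1 {ν : ℝ} (hν : 0 < ν) (t : ℝ) :
    Summable (fun m : ℕ => ((m:ℝ)+1) * aa ν (m+1) * t^m) := by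
  apply Summable.of_norm_bounded (abs_le_helper hν t 1 1)
  intro m
  rw [Real.norm_eq_abs, abs_mul, abs_mul, abs_pow,
    abs_of_nonneg (by positivity : (0:ℝ) ≤ (m:ℝ)+1), pow_one]

lemma summable_G {ν : ℝ} (hν : 0 < ν) (t : ℝ) :
    Summable (fun m : ℕ => ((m:ℝ)+1) * (m:ℝ) * aa ν (m+1) * t^m) := by
  apply Summable.of_norm_bounded (abs_le_helper hν t 2 1)
  intro m
  rw [Real.norm_eq_abs, abs_mul, abs_mul, abs_mul, abs_pow,
    abs_of_nonneg (by positivity : (0:ℝ) ≤ (m:ℝ)+1),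
    abs_of_nonneg (Nat.cast_nonneg m)]
  have h3 : ((m:ℝ)+1) * (m:ℝ) ≤ ((m:ℝ)+1)^2 := by nlinarith [Nat.cast_nonneg (α := ℝ) m]
  calc ((m:ℝ)+1) * (m:ℝ) * |aa ν (m+1)| * |t|^m
      = (((m:ℝ)+1)*(m:ℝ)) * (|aa ν (m+1)| * |t|^m) := by ring
    _ ≤ ((m:ℝ)+1)^2 * (|aa ν (m+1)| * |t|^m) :=
        mul_le_mul_of_nonneg_right h3 (by positivity)
    _ = ((m:ℝ)+1)^2 * |aa ν (m+1)| * |t|^m := by ring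

lemma hasDerivAt_FF {ν : ℝ} (hν : 0 < ν) (t : ℝ) :
    HasDerivAt (FF ν) (FF1 ν t) t := by
  have := hasDerivAt_tsum_pow (aa ν)
    (fun s hs => by simpa using aaSummable hν 0 0 hs)
    (fun s hs => by simpa using aaSummable hν 1 1 hs) t
  exact this

lemma hasDerivAt_FF1 {ν : ℝ} (hν : 0 < ν) (t : ℝ) :
    HasDerivAt (FF1 ν) (FF2 ν t) t := by
  have key := hasDerivAt_tsum_pow (fun m => ((m:ℝ)+1) * aa ν (m+1))
    ?_ ?_ t
  · have h1 : (fun x => ∑' m : ℕ, ((m:ℝ)+1) * aa ν (m+1) * x^m) = FF1 ν := rfl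
    rw [h1] at key
    have heq : HasDerivAt (FF1 ν) (FF2 ν t) t ↔ _ := Iff.rfl
    convert key using 1
    rw [FF2]
    apply tsum_congr
    intro m
    push_cast
    ring
  · intro s hs
    apply Summable.of_nonneg_of_le (fun m => by positivity)
      (fun m => ?_) (aaSummable hν 1 1 hs)
    simp only [abs_mul]
    rw [abs_of_nonneg (by positivity : (0:ℝ) ≤ (m:ℝ)+1), pow_one]
  · intro s hs
    apply Summable.of_nonneg_of_le (fun m => by positivity)
      (fun m => ?_) ((aaSummable hν 2 2 hs).mul_left 2)
    simp only [abs_mul]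
    have e2 : (m+1+1) = m+2 := rfl
    push_cast
    rw [abs_of_nonneg (by positivity : (0:ℝ) ≤ (m:ℝ)+1+1), e2]
    have h2 : (0:ℝ) ≤ |aa ν (m+2)| * s^m := by positivity
    have h3 : ((m:ℝ)+1) * ((m:ℝ)+1+1) ≤ 2 * ((m:ℝ)+1)^2 := by
      nlinarith [Nat.cast_nonneg (α := ℝ) m]
    calc ((m:ℝ)+1) * ((((m:ℝ)+1+1)) * |aa ν (m+2)|) * s^m
        = (((m:ℝ)+1) * ((m:ℝ)+1+1)) * (|aa ν (m+2)| * s^m) := by ring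
      _ ≤ (2 * ((m:ℝ)+1)^2) * (|aa ν (m+2)| * s^m) := mul_le_mul_of_nonneg_right h3 h2
      _ = 2 * (((m:ℝ)+1)^2 * |aa ν (m+2)| * s^m) := by ring

lemma FF_zero {ν : ℝ} : FF ν 0 = aa ν 0 := by
  rw [FF, tsum_eq_single 0]
  · simp
  · intro m hm
    simp [zero_pow hm]

lemma FF_ode {ν : ℝ} (hν : 0 < ν) (t : ℝ) :
    4 * t * FF2 ν t + 4 * (ν+1) * FF1 ν t + FF ν t = 0 := by
  have hG := summable_G hν t
  have hF1 := summable_FF1 hν t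
  have hF := summable_FF hν t
  -- t * FF2 t = ∑' G m
  have h1 : t * FF2 ν t = ∑' m : ℕ, ((m:ℝ)+1) * (m:ℝ) * aa ν (m+1) * t^m := by
    rw [FF2, ← tsum_mul_left, Summable.tsum_eq_zero_add hG]
    simp only [Nat.cast_zero, mul_zero, zero_mul, zero_add]
    apply tsum_congr
    intro m
    push_cast
    ring
  have h1' : 4 * t * FF2 ν t = 4 * (∑' m : ℕ, ((m:ℝ)+1) * (m:ℝ) * aa ν (m+1) * t^m) := by
    rw [mul_assoc, h1]
  rw [h1']
  have key : ∀ m : ℕ, 4 * (((m:ℝ)+1) * (m:ℝ) * aa ν (m+1) * t^m)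
      + 4*(ν+1) * (((m:ℝ)+1) * aa ν (m+1) * t^m) + aa ν m * t^m = 0 := by
    intro m
    rw [aa_succ hν m]
    have h3 : (4 * ((m:ℝ)+1) * ((m:ℝ) + ν + 1)) ≠ 0 := by
      have := gamma_arg_pos hν m
      positivity
    field_simp
    ring
  have : 4 * (∑' m : ℕ, ((m:ℝ)+1) * (m:ℝ) * aa ν (m+1) * t^m)
      + 4*(ν+1) * (∑' m : ℕ, ((m:ℝ)+1) * aa ν (m+1) * t^m)
      + (∑' m : ℕ, aa ν m * t^m) = ∑' m : ℕ, (4 * (((m:ℝ)+1) * (m:ℝ) * aa ν (m+1) * t^m)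
      + 4*(ν+1) * (((m:ℝ)+1) * aa ν (m+1) * t^m) + aa ν m * t^m) := by
    rw [Summable.tsum_add ((hG.mul_left 4).add (hF1.mul_left (4*(ν+1)))) hF,
      Summable.tsum_add (hG.mul_left 4) (hF1.mul_left (4*(ν+1))), tsum_mul_left, tsum_mul_left]
  rw [FF1, FF, this]
  simp [key]

noncomputable def uu (ν : ℝ) (x : ℝ) : ℝ := Real.sqrt x * besselJ ν x

noncomputable def uu1 (ν : ℝ) (x : ℝ) : ℝ :=
  (2:ℝ)^(-ν) * ((ν+1/2) * x^(ν+1/2-1) * FF ν (x^2) + 2 * x^(ν+1/2+1) * FF1 ν (x^2))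

noncomputable def uu2 (ν : ℝ) (x : ℝ) : ℝ :=
  (2:ℝ)^(-ν) * ((ν+1/2)*(ν+1/2-1) * x^(ν+1/2-2) * FF ν (x^2)
    + (4*(ν+1/2)+2) * x^(ν+1/2) * FF1 ν (x^2) + 4 * x^(ν+1/2+2) * FF2 ν (x^2))

lemma uu_eq {ν : ℝ} (hν : 0 < ν) {x : ℝ} (hx : 0 < x) :
    uu ν x = (2:ℝ)^(-ν) * (x ^ (ν+1/2) * FF ν (x^2)) := by
  have h2 : (0:ℝ) < 2 := two_pos
  have hterm : ∀ m : ℕ,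
      ((-1:ℝ)^m / ((Nat.factorial m : ℝ) * Real.Gamma ((m:ℝ) + ν + 1))) *
        (x/2) ^ (2*(m:ℝ) + ν) = (2:ℝ)^(-ν) * x^(ν:ℝ) * (aa ν m * (x^2)^m) := by
    intro m
    have hx2 : (0:ℝ) ≤ x / 2 := by positivity
    have e1 : (x/2) ^ (2*(m:ℝ) + ν) = x ^ (2*(m:ℝ) + ν) / 2 ^ (2*(m:ℝ) + ν) :=
      Real.div_rpow hx.le h2.le _
    have e2 : x ^ (2*(m:ℝ) + ν) = (x^2)^m * x^(ν:ℝ) := by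
      rw [Real.rpow_add hx]
      congr 1
      rw [show (2*(m:ℝ)) = ((2*m : ℕ):ℝ) by push_cast; ring, Real.rpow_natCast, pow_mul]
    have e3 : (2:ℝ) ^ (2*(m:ℝ) + ν) = 4^m * 2^(ν:ℝ) := by
      rw [Real.rpow_add h2]
      congr 1
      rw [show (2*(m:ℝ)) = ((2*m : ℕ):ℝ) by push_cast; ring, Real.rpow_natCast, pow_mul]
      norm_num
    rw [e1, e2, e3, aa, Real.rpow_neg h2.le]
    have h4 : (0:ℝ) < 4^m := by positivity
    have h2ν : (0:ℝ) < 2^(ν:ℝ) := Real.rpow_pos_of_pos h2 ν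
    field_simp
  have : besselJ ν x = (2:ℝ)^(-ν) * x^(ν:ℝ) * FF ν (x^2) := by
    rw [besselJ, FF]
    rw [tsum_congr hterm, tsum_mul_left]
  rw [uu, this]
  have e4 : Real.sqrt x * x^(ν:ℝ) = x^(ν+1/2) := by
    rw [Real.sqrt_eq_rpow, ← Real.rpow_add hx]
    congr 1
    ring
  calc Real.sqrt x * ((2:ℝ)^(-ν) * x^(ν:ℝ) * FF ν (x^2))
      = (2:ℝ)^(-ν) * ((Real.sqrt x * x^(ν:ℝ)) * FF ν (x^2)) := by ring
    _ = (2:ℝ)^(-ν) * (x^(ν+1/2) * FF ν (x^2)) := by rw [e4]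

lemma hasDerivAt_uu {ν : ℝ} (hν : 0 < ν) {x : ℝ} (hx : 0 < x) :
    HasDerivAt (uu ν) (uu1 ν x) x := by
  have hsq : HasDerivAt (fun y : ℝ => y^2) (2*x) x := by
    simpa using hasDerivAt_pow 2 x
  have hF : HasDerivAt (fun y : ℝ => FF ν (y^2)) (FF1 ν (x^2) * (2*x)) x :=
    by have := (hasDerivAt_FF hν (x^2)).comp x hsq; exact this
  have hp : HasDerivAt (fun y : ℝ => y ^ (ν+1/2)) ((ν+1/2) * x^(ν+1/2-1)) x :=
    Real.hasDerivAt_rpow_const (Or.inl hx.ne')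
  have hmul := (hp.mul hF).const_mul ((2:ℝ)^(-ν))
  have heq : (2:ℝ)^(-ν) * ((ν+1/2) * x^(ν+1/2-1) * FF ν (x^2)
      + x^(ν+1/2) * (FF1 ν (x^2) * (2*x))) = uu1 ν x := by
    rw [uu1]
    have e : x^(ν+1/2) * x = x^(ν+1/2+1) := (Real.rpow_add_one hx.ne' _).symm
    rw [show x^(ν+1/2) * (FF1 ν (x^2) * (2*x)) = 2 * (x^(ν+1/2) * x) * FF1 ν (x^2) by ring, e]
    all_goals ring
  rw [← heq]
  apply hmul.congr_of_eventuallyEq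
  filter_upwards [isOpen_Ioi.mem_nhds hx] with y hy
  rw [uu_eq hν hy]
  rfl

lemma hasDerivAt_uu1 {ν : ℝ} (hν : 0 < ν) {x : ℝ} (hx : 0 < x) :
    HasDerivAt (uu1 ν) (uu2 ν x) x := by
  have hsq : HasDerivAt (fun y : ℝ => y^2) (2*x) x := by
    simpa using hasDerivAt_pow 2 x
  have hF : HasDerivAt (fun y : ℝ => FF ν (y^2)) (FF1 ν (x^2) * (2*x)) x :=
    by have := (hasDerivAt_FF hν (x^2)).comp x hsq; exact this
  have hF1 : HasDerivAt (fun y : ℝ => FF1 ν (y^2)) (FF2 ν (x^2) * (2*x)) x :=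
    by have := (hasDerivAt_FF1 hν (x^2)).comp x hsq; exact this
  have hp1 : HasDerivAt (fun y : ℝ => y ^ (ν+1/2-1)) ((ν+1/2-1) * x^(ν+1/2-1-1)) x :=
    Real.hasDerivAt_rpow_const (Or.inl hx.ne')
  have hp2 : HasDerivAt (fun y : ℝ => y ^ (ν+1/2+1)) ((ν+1/2+1) * x^(ν+1/2+1-1)) x :=
    Real.hasDerivAt_rpow_const (Or.inl hx.ne')
  have h1 := (hp1.mul hF).const_mul (ν+1/2)
  have h2 := (hp2.mul hF1).const_mul (2:ℝ)
  have hsum := (h1.add h2).const_mul ((2:ℝ)^(-ν))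
  have hfun : (fun y : ℝ => (2:ℝ)^(-ν) * ((ν+1/2) * (y^(ν+1/2-1) * FF ν (y^2))
      + 2 * (y^(ν+1/2+1) * FF1 ν (y^2)))) = uu1 ν := by
    funext y
    rw [uu1]
    ring
  change HasDerivAt (fun y : ℝ => (2:ℝ)^(-ν) * ((ν+1/2) * (y^(ν+1/2-1) * FF ν (y^2))
      + 2 * (y^(ν+1/2+1) * FF1 ν (y^2)))) _ x at hsum
  rw [hfun] at hsum
  convert hsum using 1
  rw [uu2]
  -- rewrite exponents
  have E : ∀ c : ℝ, x ^ (ν+1/2-2+c) = x^(ν+1/2-2) * x^c := fun c => Real.rpow_add hx _ _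
  have P : ∀ n : ℕ, x^((n:ℝ)) = x^n := fun n => Real.rpow_natCast x n
  have e0 : x^(ν+1/2-1-1) = x^(ν+1/2-2) := by rw [show ν+1/2-1-1 = ν+1/2-2 by ring]
  have e1 : x^(ν+1/2-1) = x^(ν+1/2-2) * x := by
    rw [show ν+1/2-1 = ν+1/2-2+1 by ring, E 1, Real.rpow_one]
  have e2 : x^(ν+1/2) = x^(ν+1/2-2) * x^(2:ℕ) := by
    rw [← P 2, ← E ((2:ℕ):ℝ)]; congr 1; push_cast; ring
  have e3 : x^(ν+1/2+1-1) = x^(ν+1/2-2) * x^(2:ℕ) := by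
    rw [← P 2, ← E ((2:ℕ):ℝ)]; congr 1; push_cast; ring
  have e4 : x^(ν+1/2+1) = x^(ν+1/2-2) * x^(3:ℕ) := by
    rw [← P 3, ← E ((3:ℕ):ℝ)]; congr 1; push_cast; ring
  have e5 : x^(ν+1/2+2) = x^(ν+1/2-2) * x^(4:ℕ) := by
    rw [← P 4, ← E ((4:ℕ):ℝ)]; congr 1; push_cast; ring
  rw [e0, e1, e2, e3, e4, e5]
  ring

lemma uu_ode {ν : ℝ} (hν : 0 < ν) {x : ℝ} (hx : 0 < x) :
    uu2 ν x = ((ν^2 - 1/4)/x^2 - 1) * uu ν x := by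
  have hODE := FF_ode hν (x^2)
  rw [uu2, uu_eq hν hx]
  have E : ∀ c : ℝ, x ^ (ν+1/2-2+c) = x^(ν+1/2-2) * x^c := fun c => Real.rpow_add hx _ _
  have P : ∀ n : ℕ, x^((n:ℝ)) = x^n := fun n => Real.rpow_natCast x n
  have e2 : x^(ν+1/2) = x^(ν+1/2-2) * x^(2:ℕ) := by
    rw [← P 2, ← E ((2:ℕ):ℝ)]; congr 1; push_cast; ring
  have e5 : x^(ν+1/2+2) = x^(ν+1/2-2) * x^(4:ℕ) := by
    rw [← P 4, ← E ((4:ℕ):ℝ)]; congr 1; push_cast; ring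
  have hx2 : (x:ℝ)^2 ≠ 0 := by positivity
  have hF2 : FF2 ν (x^2) = -(4*(ν+1) * FF1 ν (x^2) + FF ν (x^2)) / (4*x^2) := by
    field_simp
    linarith [hODE]
  rw [e2, e5, hF2]
  field_simp
  ring

lemma sturm {u u1 u2 : ℝ → ℝ} {a ω : ℝ} (hω : 0 < ω)
    (hu : ∀ x ∈ Icc a (a + Real.pi/ω), HasDerivAt u (u1 x) x)
    (hu1 : ∀ x ∈ Icc a (a + Real.pi/ω), HasDerivAt u1 (u2 x) x)
    (hupos : ∀ x ∈ Icc a (a + Real.pi/ω), 0 < u x)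
    (hq : ∀ x ∈ Icc a (a + Real.pi/ω), u2 x ≤ -(ω^2) * u x) : False := by
  set b : ℝ := a + Real.pi/ω with hb
  have hπ : 0 < Real.pi := Real.pi_pos
  have hab : a < b := by
    rw [hb]
    have : 0 < Real.pi / ω := by positivity
    linarith
  set W : ℝ → ℝ := fun x => u1 x * Real.sin (ω*(x-a)) - u x * (ω * Real.cos (ω*(x-a)))
    with hWdef
  have hlin : ∀ x : ℝ, HasDerivAt (fun y => ω*(y-a)) ω x := by
    intro x
    simpa using ((hasDerivAt_id x).sub_const a).const_mul ω
  have hsin : ∀ x : ℝ, HasDerivAt (fun y => Real.sin (ω*(y-a)))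
      (ω * Real.cos (ω*(x-a))) x := by
    intro x
    have := (Real.hasDerivAt_sin (ω*(x-a))).comp x (hlin x)
    exact this.congr_deriv (mul_comm _ _)
  have hcos : ∀ x : ℝ, HasDerivAt (fun y => ω * Real.cos (ω*(y-a)))
      (-(ω^2) * Real.sin (ω*(x-a))) x := by
    intro x
    have := ((Real.hasDerivAt_cos (ω*(x-a))).comp x (hlin x)).const_mul ω
    exact this.congr_deriv (by ring)
  have hW : ∀ x ∈ Icc a b, HasDerivAt W
      ((u2 x + ω^2 * u x) * Real.sin (ω*(x-a))) x := by
    intro x hx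
    have h1 := ((hu1 x hx).mul (hsin x)).sub ((hu x hx).mul (hcos x))
    exact h1.congr_deriv (by ring)
  have hWcont : ContinuousOn W (Icc a b) := fun x hx =>
    (hW x hx).continuousAt.continuousWithinAt
  have hWanti : AntitoneOn W (Icc a b) := by
    apply antitoneOn_of_deriv_nonpos (convex_Icc a b) hWcont
    · intro x hx
      rw [interior_Icc] at hx
      exact (hW x (Ioo_subset_Icc_self hx)).differentiableAt.differentiableWithinAt
    · intro x hx
      rw [interior_Icc] at hx
      have hx' := Ioo_subset_Icc_self hx
      rw [(hW x hx').deriv]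
      apply mul_nonpos_of_nonpos_of_nonneg
      · have := hq x hx'
        have hu0 := hupos x hx'
        nlinarith
      · apply Real.sin_nonneg_of_nonneg_of_le_pi
        · have : a ≤ x := hx'.1
          nlinarith
        · have hxb : x ≤ b := hx'.2
          have : ω * (b - a) = Real.pi := by
            rw [hb]
            field_simp
            ring
          nlinarith
  have hWa : W a = -(ω * u a) := by
    simp [hWdef]
    ring
  have hWb : W b = ω * u b := by
    have : ω * (b - a) = Real.pi := by
      rw [hb]; field_simp; ring
    simp [hWdef, this, Real.sin_pi, Real.cos_pi]
    ring
  have h1 := hWanti (left_mem_Icc.2 hab.le) (right_mem_Icc.2 hab.le) hab.le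
  rw [hWa, hWb] at h1
  have hua := hupos a (left_mem_Icc.2 hab.le)
  have hub := hupos b (right_mem_Icc.2 hab.le)
  nlinarith

lemma uu1_factor {ν : ℝ} {x : ℝ} (hx : 0 < x) :
    uu1 ν x = (2:ℝ)^(-ν) * x^(ν+1/2-1) *
      ((ν+1/2) * FF ν (x^2) + 2 * x^2 * FF1 ν (x^2)) := by
  rw [uu1]
  have P : ∀ n : ℕ, x^((n:ℝ)) = x^n := fun n => Real.rpow_natCast x n
  have E : x ^ (ν+1/2+1) = x^(ν+1/2-1) * x^(2:ℕ) := by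
    rw [← P 2, ← Real.rpow_add hx]; congr 1; push_cast; ring
  rw [E]
  ring

lemma exists_small {ν : ℝ} (hν0 : 0 < ν) :
    ∃ x1 : ℝ, 0 < x1 ∧ ∀ x, 0 < x → x ≤ x1 → 0 < uu1 ν x ∧ 0 < uu ν x := by
  set P : ℝ → ℝ := fun t => (ν+1/2) * FF ν t + 2 * t * FF1 ν t with hP
  have hPc : ContinuousAt P 0 := by
    apply ContinuousAt.add
    · exact continuousAt_const.mul (hasDerivAt_FF hν0 0).continuousAt
    · exact (continuousAt_const.mul continuousAt_id).mul (hasDerivAt_FF1 hν0 0).continuousAt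
  have hFc : ContinuousAt (FF ν) 0 := (hasDerivAt_FF hν0 0).continuousAt
  have hP0 : 0 < P 0 := by
    have := aa_pos0 hν0
    simp [hP, FF_zero]
    positivity
  have hF0 : 0 < FF ν 0 := by rw [FF_zero]; exact aa_pos0 hν0
  have h1 : ∀ᶠ t in 𝓝 (0:ℝ), 0 < P t := hPc.eventually (eventually_gt_nhds hP0)
  have h2 : ∀ᶠ t in 𝓝 (0:ℝ), 0 < FF ν t := hFc.eventually (eventually_gt_nhds hF0)
  obtain ⟨ε, hε, hball⟩ := Metric.eventually_nhds_iff.mp (h1.and h2)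
  refine ⟨Real.sqrt ε / 2, by positivity, ?_⟩
  intro x hx hxle
  have hsε : 0 < Real.sqrt ε := Real.sqrt_pos.mpr hε
  have hx2 : x^2 < ε := by
    nlinarith [Real.sq_sqrt hε.le]
  have hdist : dist (x^2) 0 < ε := by
    rw [Real.dist_eq, sub_zero, abs_of_pos (by positivity)]
    exact hx2
  obtain ⟨hPpos, hFpos⟩ := hball hdist
  constructor
  · rw [uu1_factor hx]
    have h2ν : (0:ℝ) < (2:ℝ)^(-ν) := Real.rpow_pos_of_pos two_pos _
    have hxp : (0:ℝ) < x^(ν+1/2-1) := Real.rpow_pos_of_pos hx _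
    have : 0 < P (x^2) := hPpos
    rw [hP] at this
    simp only at this
    positivity
  · rw [uu_eq hν0 hx]
    have h2ν : (0:ℝ) < (2:ℝ)^(-ν) := Real.rpow_pos_of_pos two_pos _
    have hxp : (0:ℝ) < x^(ν+1/2) := Real.rpow_pos_of_pos hx _
    positivity

lemma exists_crit {ν : ℝ} (hν : 1/2 ≤ ν) : ∃ x, 0 < x ∧ uu1 ν x = 0 := by
  have hν0 : 0 < ν := lt_of_lt_of_le (by norm_num) hν
  by_contra hcon
  push_neg at hcon
  obtain ⟨x1, hx1, hsmall⟩ := exists_small hν0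
  -- uu1 is positive everywhere on (0, ∞)
  have hu1pos : ∀ x, 0 < x → 0 < uu1 ν x := by
    intro x hx
    rcases le_or_gt x x1 with h | h
    · exact (hsmall x hx h).1
    · by_contra hneg
      push_neg at hneg
      have hne := hcon x hx
      have hlt : uu1 ν x < 0 := lt_of_le_of_ne hneg hne
      have hcontOn : ContinuousOn (uu1 ν) (Icc x1 x) := by
        intro y hy
        exact (hasDerivAt_uu1 hν0 (lt_of_lt_of_le hx1 hy.1)).continuousAt.continuousWithinAt
      have := intermediate_value_Icc' h.le hcontOn
      have h0mem : (0:ℝ) ∈ Icc (uu1 ν x) (uu1 ν x1) :=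
        ⟨hlt.le, (hsmall x1 hx1 le_rfl).1.le⟩
      obtain ⟨z, hz, hz0⟩ := this h0mem
      exact hcon z (lt_of_lt_of_le hx1 hz.1) hz0
  -- uu is strictly monotone on (0, ∞)
  have hmono : StrictMonoOn (uu ν) (Ioi 0) := by
    apply strictMonoOn_of_deriv_pos (convex_Ioi 0)
    · intro y hy
      exact (hasDerivAt_uu hν0 hy).continuousAt.continuousWithinAt
    · intro y hy
      rw [interior_Ioi] at hy
      rw [(hasDerivAt_uu hν0 hy).deriv]
      exact hu1pos y hy
  have hupos : ∀ x, x1 ≤ x → 0 < uu ν x := by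
    intro x hx
    rcases eq_or_lt_of_le hx with h | h
    · rw [← h]; exact (hsmall x1 hx1 le_rfl).2
    · calc (0:ℝ) < uu ν x1 := (hsmall x1 hx1 le_rfl).2
        _ < uu ν x := hmono (mem_Ioi.mpr hx1) (mem_Ioi.mpr (hx1.trans h)) h
  -- Sturm comparison on [a, a + π/ω]
  set ω : ℝ := Real.sqrt 3 / 2 with hω
  have hω0 : 0 < ω := by
    have : (0:ℝ) < Real.sqrt 3 := Real.sqrt_pos.mpr (by norm_num)
    positivity
  have hω2 : ω^2 = 3/4 := by
    rw [hω, div_pow, Real.sq_sqrt (by norm_num : (3:ℝ) ≥ 0)]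
    norm_num
  set a : ℝ := max x1 (2*ν) with ha
  have hax1 : x1 ≤ a := le_max_left _ _
  have haν : 2*ν ≤ a := le_max_right _ _
  have ha0 : 0 < a := lt_of_lt_of_le hx1 hax1
  have hIccpos : ∀ x ∈ Icc a (a + Real.pi/ω), 0 < x :=
    fun x hx => lt_of_lt_of_le ha0 hx.1
  apply sturm hω0
    (fun x hx => hasDerivAt_uu hν0 (hIccpos x hx))
    (fun x hx => hasDerivAt_uu1 hν0 (hIccpos x hx))
    (fun x hx => hupos x (hax1.trans hx.1))
  intro x hx
  have hx0 := hIccpos x hx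
  have hxu := hupos x (hax1.trans hx.1)
  rw [uu_ode hν0 hx0, hω2]
  have hx2ν : 2*ν ≤ x := haν.trans hx.1
  have hxsq : 4*ν^2 ≤ x^2 := by nlinarith
  have hcoef : (ν^2 - 1/4)/x^2 - 1 ≤ -(3/4) := by
    have hx2 : (0:ℝ) < x^2 := by positivity
    have h1 : (ν^2 - 1/4)/x^2 ≤ 1/4 := by
      rw [div_le_iff₀ hx2]; nlinarith
    linarith
  exact mul_le_mul_of_nonneg_right hcoef hxu.le


/-- c_k > 0 and H_{k,1} is a well-defined cdf on (0,∞). -/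
theorem stmt9 (k : ℕ) (hk : 1 ≤ k) :
    0 < besselC k ∧
    ContinuousOn (Hk k) (Set.Ioi 0) ∧
    MonotoneOn (Hk k) (Set.Ioi 0) ∧
    (∀ r : ℝ, 0 < r → Hk k r ∈ Set.Icc (0:ℝ) 1) ∧
    Hk k (besselC k) = 1 := by
  set ν : ℝ := besselNu k with hνdef
  have hν : 1/2 ≤ ν := by
    rw [hνdef, besselNu]
    have hk1 : (1:ℝ) ≤ (k:ℝ) := by exact_mod_cast hk
    have h1 : (1:ℝ) ≤ 2*(k:ℝ) - 1 := by linarith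
    have h2 : (1:ℝ) ≤ Real.sqrt (2*(k:ℝ) - 1) := by
      nlinarith [Real.sq_sqrt (by linarith : (0:ℝ) ≤ 2*(k:ℝ)-1),
        Real.sqrt_nonneg (2*(k:ℝ)-1)]
    linarith
  have hν0 : 0 < ν := lt_of_lt_of_le (by norm_num) hν
  have hderiv : ∀ x : ℝ, 0 < x →
      deriv (fun y => Real.sqrt y * besselJ (besselNu k) y) x = uu1 ν x := by
    intro x hx
    exact (hasDerivAt_uu hν0 hx).deriv
  obtain ⟨x1, hx1, hsmall⟩ := exists_small hν0
  set S : Set ℝ :=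
    {x : ℝ | 0 < x ∧ deriv (fun y => Real.sqrt y * besselJ (besselNu k) y) x = 0} with hSdef
  have hcdef : besselC k = sInf S := rfl
  have hSmem : ∀ x ∈ S, x1 ≤ x := by
    rintro x ⟨hx0, hxd⟩
    by_contra h
    push_neg at h
    have := (hsmall x hx0 h.le).1
    rw [hderiv x hx0] at hxd
    exact this.ne' hxd
  have hSne : S.Nonempty := by
    obtain ⟨x, hx0, hx1'⟩ := exists_crit hν
    exact ⟨x, hx0, by rw [hderiv x hx0]; exact hx1'⟩
  have hbdd : BddBelow S := ⟨x1, hSmem⟩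
  set c : ℝ := besselC k with hcdef2
  have hcx1 : x1 ≤ c := by rw [hcdef]; exact le_csInf hSne hSmem
  have hc0 : 0 < c := lt_of_lt_of_le hx1 hcx1
  have hu1pos : ∀ x, 0 < x → x < c → 0 < uu1 ν x := by
    intro x hx0 hxc
    rcases le_or_gt x x1 with h | h
    · exact (hsmall x hx0 h).1
    · by_contra hneg
      push_neg at hneg
      have hne : uu1 ν x ≠ 0 := by
        intro h0
        have hcs : c ≤ x := by
          rw [hcdef]
          exact csInf_le hbdd ⟨hx0, by rw [hderiv x hx0]; exact h0⟩
        linarith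
      have hlt : uu1 ν x < 0 := lt_of_le_of_ne hneg hne
      have hcontOn : ContinuousOn (uu1 ν) (Icc x1 x) := fun y hy =>
        (hasDerivAt_uu1 hν0 (lt_of_lt_of_le hx1 hy.1)).continuousAt.continuousWithinAt
      obtain ⟨z, hz, hz0⟩ := intermediate_value_Icc' h.le hcontOn
        ⟨hlt.le, (hsmall x1 hx1 le_rfl).1.le⟩
      have hz0' : 0 < z := lt_of_lt_of_le hx1 hz.1
      have hcs : c ≤ z := by
        rw [hcdef]
        exact csInf_le hbdd ⟨hz0', by rw [hderiv z hz0']; exact hz0⟩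
      linarith [hz.2]
  have hmono : StrictMonoOn (uu ν) (Ioc 0 c) := by
    apply strictMonoOn_of_deriv_pos (convex_Ioc 0 c)
    · exact fun y hy => (hasDerivAt_uu hν0 hy.1).continuousAt.continuousWithinAt
    · intro y hy
      rw [interior_Ioc] at hy
      rw [(hasDerivAt_uu hν0 hy.1).deriv]
      exact hu1pos y hy.1 hy.2
  have hupos : ∀ r, r ∈ Ioc 0 c → 0 < uu ν r := by
    intro r hr
    rcases le_or_gt r x1 with h | h
    · exact (hsmall r hr.1 h).2
    · calc (0:ℝ) < uu ν x1 := (hsmall x1 hx1 le_rfl).2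
        _ < uu ν r := hmono ⟨hx1, hcx1⟩ hr h
  have hule : ∀ r, r ∈ Ioc 0 c → uu ν r ≤ uu ν c :=
    fun r hr => hmono.monotoneOn hr ⟨hc0, le_rfl⟩ hr.2
  have hucpos : 0 < uu ν c := hupos c ⟨hc0, le_rfl⟩
  have hHk : ∀ r : ℝ, Hk k r = if r ≤ c then uu ν r / uu ν c else 1 := fun r => rfl
  have hHkc : Hk k c = 1 := by
    rw [hHk c, if_pos le_rfl]
    exact div_self hucpos.ne'
  refine ⟨hc0, ?_, ?_, ?_, hHkc⟩
  · -- continuity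
    intro r hr
    have hr0 : 0 < r := hr
    rcases lt_trichotomy r c with hrc | hrc | hrc
    · have hca : ContinuousAt (fun y => uu ν y / uu ν c) r :=
        (hasDerivAt_uu hν0 hr0).continuousAt.div continuousAt_const hucpos.ne'
      have hev : (fun y => uu ν y / uu ν c) =ᶠ[𝓝 r] Hk k := by
        filter_upwards [Iio_mem_nhds hrc] with y hy
        rw [hHk y, if_pos hy.le]
      exact (hca.congr hev).continuousWithinAt
    · rw [hrc]
      have cwa1 : ContinuousWithinAt (Hk k) (Iic c) c := by
        have hca : ContinuousWithinAt (fun y => uu ν y / uu ν c) (Iic c) c :=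
          ((hasDerivAt_uu hν0 hc0).continuousAt.div continuousAt_const
            hucpos.ne').continuousWithinAt
        exact hca.congr (fun y hy => by rw [hHk y, if_pos (mem_Iic.mp hy)])
          (by rw [hHk c, if_pos le_rfl])
      have cwa2 : ContinuousWithinAt (Hk k) (Ici c) c := by
        apply (continuousWithinAt_const (b := (1:ℝ))).congr
        · intro y hy
          rw [hHk y]
          rcases eq_or_lt_of_le (mem_Ici.mp hy) with h | h
          · rw [← h, if_pos le_rfl]
            exact div_self hucpos.ne'
          · rw [if_neg (not_le.mpr h)]
        · exact hHkc
      exact (cwa1.union cwa2).mono (by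
        intro y _
        rcases le_total y c with h | h
        exacts [Or.inl h, Or.inr h])
    · have hev : (fun _ : ℝ => (1:ℝ)) =ᶠ[𝓝 r] Hk k := by
        filter_upwards [Ioi_mem_nhds hrc] with y hy
        rw [hHk y, if_neg (not_le.mpr hy)]
      exact (continuousAt_const.congr hev).continuousWithinAt
  · -- monotone
    intro x hx y hy hxy
    by_cases h1 : x ≤ c
    · by_cases h2 : y ≤ c
      · rw [hHk x, hHk y, if_pos h1, if_pos h2]
        exact (div_le_div_iff_of_pos_right hucpos).mpr (hmono.monotoneOn ⟨hx, h1⟩ ⟨hy, h2⟩ hxy)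
      · rw [hHk x, hHk y, if_pos h1, if_neg h2]
        exact (div_le_one hucpos).mpr (hule x ⟨hx, h1⟩)
    · have h2 : ¬ y ≤ c := not_le.mpr (lt_of_lt_of_le (not_le.mp h1) hxy)
      rw [hHk x, hHk y, if_neg h1, if_neg h2]
  · -- values
    intro r hr
    rw [hHk r]
    split_ifs with h
    · exact ⟨div_nonneg (hupos r ⟨hr, h⟩).le hucpos.le,
        (div_le_one hucpos).mpr (hule r ⟨hr, h⟩)⟩
    · exact ⟨zero_le_one, le_rfl⟩
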